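/- Let (u, w) be a pair of nonnegative continuous functions on [0,∞) satisfying, for constants c > 0, a > c, C ≥ 0, ε(t) := η e^{-γ t} + β with η, β ≥ 0, γ > 0: u(t) ≤ u(0)e^{-ct} + h/c + C∫₀^t e^{-c(t−s)} ε(s)(u(s) + w(s)) ds and w(t) ≤ w(0)e^{-at} + C∫₀^t e^{-a(t−s)} ε(s) u(s) ds. Then Θ(t) := u(t) + w(t) satisfies Θ(t) ≤ Θ(0)e^{-ct} + h/c + 2C ∫₀^t e^{-c(t−s)} ε(s) Θ(s) ds, and consequently e^{ct}Θ(t) ≤ (Θ(0) + h/c) exp(2Cη/γ + 2Cβ t) + h∫₀^t e^{cs} exp(2Cη/γ + 2Cβ(t−s)) ds. -/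

import Mathlib

theorem stmt_19 (u w : ℝ → ℝ) (c a C h η β γ : ℝ)
    (hc : 0 < c) (ha : c < a) (hC : 0 ≤ C) (hh : 0 ≤ h) (hη : 0 ≤ η) (hβ : 0 ≤ β)
    (hγ : 0 < γ)
    (hu_cont : Continuous u) (hw_cont : Continuous w)
    (hu_nonneg : ∀ t, 0 ≤ t → 0 ≤ u t) (hw_nonneg : ∀ t, 0 ≤ t → 0 ≤ w t)
    (hu_ineq : ∀ t, 0 ≤ t → u t ≤ u 0 * Real.exp (-c * t) + h / c +
      C * ∫ s in (0:ℝ)..t,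
        Real.exp (-c * (t - s)) * (η * Real.exp (-γ * s) + β) * (u s + w s))
    (hw_ineq : ∀ t, 0 ≤ t → w t ≤ w 0 * Real.exp (-a * t) +
      C * ∫ s in (0:ℝ)..t, Real.exp (-a * (t - s)) * (η * Real.exp (-γ * s) + β) * u s) :
    (∀ t, 0 ≤ t → u t + w t ≤ (u 0 + w 0) * Real.exp (-c * t) + h / c +
      2 * C * ∫ s in (0:ℝ)..t,
        Real.exp (-c * (t - s)) * (η * Real.exp (-γ * s) + β) * (u s + w s)) ∧
    (∀ t, 0 ≤ t → Real.exp (c * t) * (u t + w t) ≤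
      (u 0 + w 0 + h / c) * Real.exp (2 * C * η / γ + 2 * C * β * t) +
      h * ∫ s in (0:ℝ)..t,
        Real.exp (c * s) * Real.exp (2 * C * η / γ + 2 * C * β * (t - s))) := by
  have hεcont : Continuous (fun s => η * Real.exp (-γ * s) + β) := by
    exact (continuous_const.mul ((continuous_const.mul continuous_id).rexp)).add continuous_const
  have hεnn : ∀ s : ℝ, 0 ≤ η * Real.exp (-γ * s) + β := fun s => by positivity
  -- Part 1
  have part1 : ∀ t, 0 ≤ t → u t + w t ≤ (u 0 + w 0) * Real.exp (-c * t) + h / c +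
      2 * C * ∫ s in (0:ℝ)..t,
        Real.exp (-c * (t - s)) * (η * Real.exp (-γ * s) + β) * (u s + w s) := by
    intro t ht
    have hIa : IntervalIntegrable
        (fun s => Real.exp (-a * (t - s)) * (η * Real.exp (-γ * s) + β) * u s)
        MeasureTheory.volume 0 t := by
      apply Continuous.intervalIntegrable
      exact (((continuous_const.mul (continuous_const.sub continuous_id)).rexp).mul hεcont).mul hu_cont
    have hIc : IntervalIntegrable
        (fun s => Real.exp (-c * (t - s)) * (η * Real.exp (-γ * s) + β) * (u s + w s))
        MeasureTheory.volume 0 t := by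
      apply Continuous.intervalIntegrable
      exact (((continuous_const.mul (continuous_const.sub continuous_id)).rexp).mul hεcont).mul
        (hu_cont.add hw_cont)
    have hmono : (∫ s in (0:ℝ)..t,
          Real.exp (-a * (t - s)) * (η * Real.exp (-γ * s) + β) * u s) ≤
        ∫ s in (0:ℝ)..t,
          Real.exp (-c * (t - s)) * (η * Real.exp (-γ * s) + β) * (u s + w s) := by
      apply intervalIntegral.integral_mono_on ht hIa hIc
      intro s hs
      obtain ⟨hs0, hst⟩ := hs
      have h1 : Real.exp (-a * (t - s)) ≤ Real.exp (-c * (t - s)) := by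
        apply Real.exp_le_exp.2
        nlinarith
      have h2 : u s ≤ u s + w s := by linarith [hw_nonneg s hs0]
      have h3 : 0 ≤ Real.exp (-a * (t - s)) * (η * Real.exp (-γ * s) + β) := by positivity
      calc Real.exp (-a * (t - s)) * (η * Real.exp (-γ * s) + β) * u s
          ≤ Real.exp (-a * (t - s)) * (η * Real.exp (-γ * s) + β) * (u s + w s) :=
            mul_le_mul_of_nonneg_left h2 h3
        _ ≤ Real.exp (-c * (t - s)) * (η * Real.exp (-γ * s) + β) * (u s + w s) := by
            apply mul_le_mul_of_nonneg_right (mul_le_mul_of_nonneg_right h1 (hεnn s))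
            have := hu_nonneg s hs0; have := hw_nonneg s hs0; linarith
    have hw0 : w 0 * Real.exp (-a * t) ≤ w 0 * Real.exp (-c * t) := by
      apply mul_le_mul_of_nonneg_left _ (hw_nonneg 0 le_rfl)
      apply Real.exp_le_exp.2; nlinarith
    have hCmono := mul_le_mul_of_nonneg_left hmono hC
    have hu := hu_ineq t ht
    have hw := hw_ineq t ht
    have h2C : 2 * C * (∫ s in (0:ℝ)..t,
        Real.exp (-c * (t - s)) * (η * Real.exp (-γ * s) + β) * (u s + w s)) =
        C * (∫ s in (0:ℝ)..t,
        Real.exp (-c * (t - s)) * (η * Real.exp (-γ * s) + β) * (u s + w s)) +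
        C * (∫ s in (0:ℝ)..t,
        Real.exp (-c * (t - s)) * (η * Real.exp (-γ * s) + β) * (u s + w s)) := by ring
    linarith
  refine ⟨part1, ?_⟩
  -- Part 2
  set v : ℝ → ℝ := fun s => Real.exp (c * s) * (u s + w s) with hvdef
  have hvcont : Continuous v :=
    ((continuous_const.mul continuous_id).rexp).mul (hu_cont.add hw_cont)
  set K : ℝ := u 0 + w 0 + h / c with hKdef
  have hK0 : 0 ≤ K := by
    have := hu_nonneg 0 le_rfl; have := hw_nonneg 0 le_rfl
    have : 0 ≤ h / c := by positivity
    simp only [hKdef]; linarith [hu_nonneg 0 le_rfl, hw_nonneg 0 le_rfl]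
  set F : ℝ → ℝ := fun s => h * Real.exp (c * s) +
      2 * C * (η * Real.exp (-γ * s) + β) * v s with hFdef
  have hFcont : Continuous F :=
    (continuous_const.mul ((continuous_const.mul continuous_id).rexp)).add
      ((continuous_const.mul hεcont).mul hvcont)
  set ψ : ℝ → ℝ := fun t => ∫ s in (0:ℝ)..t, F s with hψdef
  have hψderiv : ∀ x : ℝ, HasDerivAt ψ (F x) x := fun x =>
    (hFcont.integral_hasStrictDerivAt 0 x).hasDerivAt
  set A : ℝ → ℝ := fun t => 2 * C * (η * (1 - Real.exp (-γ * t)) / γ + β * t) with hAdef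
  have hAderiv : ∀ x : ℝ, HasDerivAt A (2 * C * (η * Real.exp (-γ * x) + β)) x := by
    intro x
    have h1 : HasDerivAt (fun t : ℝ => -γ * t) (-γ) x := by
      simpa using (hasDerivAt_id x).const_mul (-γ)
    have h2 : HasDerivAt (fun t : ℝ => Real.exp (-γ * t)) (Real.exp (-γ * x) * (-γ)) x := h1.exp
    have h3 : HasDerivAt (fun t : ℝ => β * t) β x := by
      simpa using (hasDerivAt_id x).const_mul β
    have h4 := (((h2.const_sub 1).const_mul η).div_const γ).add h3
    have h5 := h4.const_mul (2 * C)
    refine h5.congr_deriv ?_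
    field_simp
  have hAcont : Continuous A := by
    have : Differentiable ℝ A := fun x => (hAderiv x).differentiableAt
    exact this.continuous
  have hB_int_cont : Continuous (fun s => h * Real.exp (c * s) * Real.exp (-(A s))) :=
    ((continuous_const.mul ((continuous_const.mul continuous_id).rexp)).mul hAcont.neg.rexp)
  set B : ℝ → ℝ := fun t => ∫ s in (0:ℝ)..t, h * Real.exp (c * s) * Real.exp (-(A s)) with hBdef
  have hBderiv : ∀ x : ℝ, HasDerivAt B (h * Real.exp (c * x) * Real.exp (-(A x))) x := fun x =>
    (hB_int_cont.integral_hasStrictDerivAt 0 x).hasDerivAt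
  -- v t ≤ K + ψ t for t ≥ 0
  have hvle : ∀ t, 0 ≤ t → v t ≤ K + ψ t := by
    intro t ht
    have hp := part1 t ht
    have hmul := mul_le_mul_of_nonneg_left hp (Real.exp_pos (c * t)).le
    have key : ∫ s in (0:ℝ)..t, 2 * C * (η * Real.exp (-γ * s) + β) * v s =
        Real.exp (c * t) * (2 * C * ∫ s in (0:ℝ)..t,
          Real.exp (-c * (t - s)) * (η * Real.exp (-γ * s) + β) * (u s + w s)) := by
      rw [← intervalIntegral.integral_const_mul, ← intervalIntegral.integral_const_mul]
      apply intervalIntegral.integral_congr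
      intro s _
      have he : Real.exp (c * s) = Real.exp (c * t) * Real.exp (-c * (t - s)) := by
        rw [← Real.exp_add]; ring_nf
      simp only [hvdef, he]; ring
    have hexp_int : ∫ s in (0:ℝ)..t, h * Real.exp (c * s) =
        h / c * (Real.exp (c * t) - 1) := by
      have : ∀ x : ℝ, HasDerivAt (fun s => h / c * Real.exp (c * s)) (h * Real.exp (c * x)) x := by
        intro x
        have h1 : HasDerivAt (fun s : ℝ => c * s) c x := by
          simpa using (hasDerivAt_id x).const_mul c
        have h2 := (h1.exp).const_mul (h / c)
        refine h2.congr_deriv ?_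
        field_simp
      rw [intervalIntegral.integral_eq_sub_of_hasDerivAt (fun x _ => this x)
        (by apply Continuous.intervalIntegrable; fun_prop)]
      simp [Real.exp_zero]
      ring
    have hψeq : ψ t = h / c * (Real.exp (c * t) - 1) +
        Real.exp (c * t) * (2 * C * ∫ s in (0:ℝ)..t,
          Real.exp (-c * (t - s)) * (η * Real.exp (-γ * s) + β) * (u s + w s)) := by
      simp only [hψdef, hFdef]
      have hint1 : IntervalIntegrable (fun s => h * Real.exp (c * s))
          MeasureTheory.volume 0 t := by
        apply Continuous.intervalIntegrable; fun_prop
      have hint2 : IntervalIntegrable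
          (fun s => 2 * C * (η * Real.exp (-γ * s) + β) * v s)
          MeasureTheory.volume 0 t := by
        apply Continuous.intervalIntegrable
        exact (continuous_const.mul hεcont).mul hvcont
      rw [intervalIntegral.integral_add hint1 hint2, hexp_int, key]
    have hexpc : Real.exp (c * t) * ((u 0 + w 0) * Real.exp (-c * t)) = u 0 + w 0 := by
      rw [show Real.exp (c * t) * ((u 0 + w 0) * Real.exp (-c * t)) =
        (Real.exp (c * t) * Real.exp (-c * t)) * (u 0 + w 0) by ring, ← Real.exp_add]
      simp
    simp only [hvdef, hKdef]
    rw [hψeq]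
    have hec1 : (1:ℝ) ≤ Real.exp (c * t) := by
      rw [show (1:ℝ) = Real.exp 0 by simp]; exact Real.exp_le_exp.2 (by positivity)
    have hhc : 0 ≤ h / c := by positivity
    nlinarith [hmul, hexpc]
  -- the Grönwall function
  set G : ℝ → ℝ := fun t => Real.exp (-(A t)) * (K + ψ t) - B t with hGdef
  have hGderiv : ∀ x : ℝ, HasDerivAt G
      (Real.exp (-(A x)) * (-(2 * C * (η * Real.exp (-γ * x) + β))) * (K + ψ x) +
        Real.exp (-(A x)) * F x - h * Real.exp (c * x) * Real.exp (-(A x))) x := by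
    intro x
    exact (((hAderiv x).neg.exp).mul ((hψderiv x).const_add K)).sub (hBderiv x)
  have hGanti : AntitoneOn G (Set.Ici (0:ℝ)) := by
    apply antitoneOn_of_deriv_nonpos (convex_Ici 0)
    · exact (fun x _ => ((hGderiv x).differentiableAt.continuousAt.continuousWithinAt))
    · intro x _
      exact (hGderiv x).differentiableAt.differentiableWithinAt
    · intro x hx
      rw [interior_Ici] at hx
      rw [(hGderiv x).deriv]
      have hvx := hvle x hx.le
      have hE : 0 < Real.exp (-(A x)) := Real.exp_pos _
      have hp : 0 ≤ 2 * C * (η * Real.exp (-γ * x) + β) := by positivity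
      have heq : Real.exp (-(A x)) * (-(2 * C * (η * Real.exp (-γ * x) + β))) * (K + ψ x) +
          Real.exp (-(A x)) * F x - h * Real.exp (c * x) * Real.exp (-(A x)) =
          Real.exp (-(A x)) * (2 * C * (η * Real.exp (-γ * x) + β)) * (v x - (K + ψ x)) := by
        simp only [hFdef]; ring
      rw [heq]
      apply mul_nonpos_of_nonneg_of_nonpos
      · positivity
      · linarith
  intro t ht
  have hGle : G t ≤ G 0 := hGanti Set.self_mem_Ici ht ht
  have hG0 : G 0 = K := by
    simp only [hGdef, hψdef, hBdef, hAdef, intervalIntegral.integral_same]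
    norm_num
  rw [hG0] at hGle
  -- so K + ψ t ≤ exp (A t) * (K + B t)
  have hstep : K + ψ t ≤ Real.exp (A t) * (K + B t) := by
    have hE : (0:ℝ) < Real.exp (A t) := Real.exp_pos _
    have h1 : Real.exp (-(A t)) * (K + ψ t) ≤ K + B t := by
      simp only [hGdef] at hGle; linarith
    have h2 := mul_le_mul_of_nonneg_left h1 hE.le
    rw [show Real.exp (A t) * (Real.exp (-(A t)) * (K + ψ t)) =
      (Real.exp (A t) * Real.exp (-(A t))) * (K + ψ t) by ring, ← Real.exp_add] at h2
    simpa using h2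
  have hvt := le_trans (hvle t ht) hstep
  -- bound exp (A t)
  have hAle : A t ≤ 2 * C * η / γ + 2 * C * β * t := by
    have he0 : 0 ≤ Real.exp (-γ * t) := Real.exp_nonneg _
    simp only [hAdef]
    rw [show 2 * C * (η * (1 - Real.exp (-γ * t)) / γ + β * t) =
      2 * C * η * (1 - Real.exp (-γ * t)) / γ + 2 * C * β * t by ring]
    have hnum : 2 * C * η * (1 - Real.exp (-γ * t)) ≤ 2 * C * η := by
      nlinarith [mul_nonneg hC hη]
    have := div_le_div_of_nonneg_right hnum hγ.le
    linarith [this]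
  have hKA : K * Real.exp (A t) ≤ K * Real.exp (2 * C * η / γ + 2 * C * β * t) :=
    mul_le_mul_of_nonneg_left (Real.exp_le_exp.2 hAle) hK0
  have hEB : Real.exp (A t) * B t ≤ h * ∫ s in (0:ℝ)..t,
      Real.exp (c * s) * Real.exp (2 * C * η / γ + 2 * C * β * (t - s)) := by
    have heq : Real.exp (A t) * B t =
        ∫ s in (0:ℝ)..t, h * Real.exp (c * s) * Real.exp (A t - A s) := by
      simp only [hBdef]
      rw [← intervalIntegral.integral_const_mul]
      apply intervalIntegral.integral_congr
      intro s _
      simp only [Real.exp_sub, Real.exp_neg]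
      ring
    rw [heq, ← intervalIntegral.integral_const_mul]
    have hint1 : IntervalIntegrable (fun s => h * Real.exp (c * s) * Real.exp (A t - A s))
        MeasureTheory.volume 0 t := by
      apply Continuous.intervalIntegrable
      exact (continuous_const.mul ((continuous_const.mul continuous_id).rexp)).mul
        ((continuous_const.sub hAcont).rexp)
    have hint2 : IntervalIntegrable
        (fun s => h * (Real.exp (c * s) * Real.exp (2 * C * η / γ + 2 * C * β * (t - s))))
        MeasureTheory.volume 0 t := by
      apply Continuous.intervalIntegrable
      exact continuous_const.mul (((continuous_const.mul continuous_id).rexp).mul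
        ((continuous_const.add (continuous_const.mul (continuous_const.sub continuous_id))).rexp))
    apply intervalIntegral.integral_mono_on ht hint1 hint2
    intro s hs
    obtain ⟨hs0, hst⟩ := hs
    have hAst : A t - A s ≤ 2 * C * η / γ + 2 * C * β * (t - s) := by
      have he0 : 0 ≤ Real.exp (-γ * t) := Real.exp_nonneg _
      have he1 : Real.exp (-γ * s) ≤ 1 := by
        rw [show (1:ℝ) = Real.exp 0 by simp]; exact Real.exp_le_exp.2 (by nlinarith)
      simp only [hAdef]
      rw [show 2 * C * (η * (1 - Real.exp (-γ * t)) / γ + β * t) -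
          2 * C * (η * (1 - Real.exp (-γ * s)) / γ + β * s) =
          2 * C * η * (Real.exp (-γ * s) - Real.exp (-γ * t)) / γ + 2 * C * β * (t - s) by ring]
      have hnum : 2 * C * η * (Real.exp (-γ * s) - Real.exp (-γ * t)) ≤ 2 * C * η := by
        nlinarith [mul_nonneg hC hη]
      have := div_le_div_of_nonneg_right hnum hγ.le
      linarith [this]
    calc h * Real.exp (c * s) * Real.exp (A t - A s)
        ≤ h * Real.exp (c * s) * Real.exp (2 * C * η / γ + 2 * C * β * (t - s)) := by
          apply mul_le_mul_of_nonneg_left (Real.exp_le_exp.2 hAst) (by positivity)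
      _ = h * (Real.exp (c * s) * Real.exp (2 * C * η / γ + 2 * C * β * (t - s))) := by ring
  show v t ≤ K * Real.exp (2 * C * η / γ + 2 * C * β * t) +
      h * ∫ s in (0:ℝ)..t, Real.exp (c * s) * Real.exp (2 * C * η / γ + 2 * C * β * (t - s))
  calc v t ≤ Real.exp (A t) * (K + B t) := hvt
    _ = K * Real.exp (A t) + Real.exp (A t) * B t := by ring
    _ ≤ _ := add_le_add hKA hEB
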